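/- Let (A,≤) be a 1-quasi-hereditary algebra and j,k ∈ Q_0. Then the Jordan–Hölder multiplicities satisfy [P(j):S(k)] = [I(j):S(k)] = |Λ^(j) ∩ Λ^(k)|. -/

import Mathlib

open scoped Classical

noncomputable section

/-! ### Basic notions for (1-)quasi-hereditary algebras

`K` is an algebraically closed field, `A` a basic finite-dimensional `K`-algebra
with complete set of primitive orthogonal idempotents `e i` indexed by the
vertex set `ι` carrying a partial order `le`. -/

section Core

variable (K : Type) [Field K] (A : Type) [Ring A] [Algebra K A]

/-- The `K`-linear endomorphism `m ↦ a • m` of an `A`-module `M`. -/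
def hitK (a : A) (M : Type) [AddCommGroup M] [Module K M] [Module A M]
    [IsScalarTower K A M] : M →ₗ[K] M where
  toFun m := a • m
  map_add' := smul_add a
  map_smul' k m := by
    simp only [RingHom.id_apply]
    exact (smul_comm k a m).symm

/-- Jordan–Hölder multiplicity `[M : S(i)] = dim_K (e_i • M)`, which is the
correct composition multiplicity for a basic algebra over an algebraically
closed field. -/
def cmult (a : A) (M : Type) [AddCommGroup M] [Module K M] [Module A M]
    [IsScalarTower K A M] : ℕ :=
  Module.finrank K (LinearMap.range (hitK K A a M))

/-- The radical of a module: intersection of all maximal submodules. -/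
def radM (M : Type) [AddCommGroup M] [Module A M] : Submodule A M :=
  sInf {N | IsCoatom N}

/-- The socle of a module: sum of all simple submodules. -/
def socM (M : Type) [AddCommGroup M] [Module A M] : Submodule A M :=
  sSup {N | IsAtom N}

/-- The top of a module, `M / rad M`. -/
abbrev topM (M : Type) [AddCommGroup M] [Module A M] : Type := M ⧸ radM A M

variable {ι : Type}

/-- The projective indecomposable module `P(i) = A e_i`. -/
def Pmod (e : ι → A) (i : ι) : Submodule A A := Submodule.span A {e i}

/-- The simple module `S(i) = top P(i)`. -/
abbrev Smod (e : ι → A) (i : ι) : Type := topM A ↥(Pmod A e i)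

/-- The subquotient `N'/N` associated to a pair of submodules. -/
abbrev subQuot {M : Type} [AddCommGroup M] [Module A M] (N N' : Submodule A M) : Type :=
  ↥N' ⧸ Submodule.comap N'.subtype N

/-- The kernel of `P(i) ↠ Δ(i)`: the smallest submodule of `P(i)` such that all
composition factors `S(j)` of the quotient satisfy `j ≤ i`. -/
def delKer (le : ι → ι → Prop) (e : ι → A) (i : ι) : Submodule A ↥(Pmod A e i) :=
  sInf {N | ∀ j, ¬ le j i → cmult K A (e j) (↥(Pmod A e i) ⧸ N) = 0}

/-- The standard module `Δ(i)`: the largest quotient of `P(i)` all of whose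
composition factors `S(j)` satisfy `j ≤ i`. -/
abbrev Dmod (le : ι → ι → Prop) (e : ι → A) (i : ι) : Type :=
  ↥(Pmod A e i) ⧸ delKer K A le e i

/-- The costandard module `∇(i)`, as the largest submodule of (an injective
envelope) `Ii` of `S(i)` all of whose composition factors `S(j)` satisfy `j ≤ i`. -/
def nabla (le : ι → ι → Prop) (e : ι → A) (i : ι) (Ii : Type) [AddCommGroup Ii]
    [Module K Ii] [Module A Ii] [IsScalarTower K A Ii] : Submodule A Ii :=
  sSup {N | ∀ j, ¬ le j i → cmult K A (e j) ↥N = 0}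

/-- `Ii` is (a copy of) the injective indecomposable module `I(i)`:
injective with socle isomorphic to `S(i)`. -/
def IsInjEnv (e : ι → A) (i : ι) (Ii : Type) [AddCommGroup Ii] [Module A Ii] : Prop :=
  Module.Injective A Ii ∧ Nonempty (↥(socM A Ii) ≃ₗ[A] Smod A e i)

/-- `Loc_i(M)`: the set of local submodules of `M` with top isomorphic to `S(i)`,
i.e. images of nonzero homomorphisms `P(i) → M`. -/
def Loc (e : ι → A) (i : ι) (M : Type) [AddCommGroup M] [Module A M] :
    Set (Submodule A M) :=
  {N | ∃ f : ↥(Pmod A e i) →ₗ[A] M, f ≠ 0 ∧ LinearMap.range f = N}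

/-- `Loc_i(N)` for a submodule `N ≤ M`, viewed inside the ambient module `M`:
the local submodules of `M` with top `S(i)` which are contained in `N`. -/
def LocIn (e : ι → A) (i : ι) {M : Type} [AddCommGroup M] [Module A M]
    (N : Submodule A M) : Set (Submodule A M) :=
  {L | L ∈ Loc A e i M ∧ L ≤ N}

end Core

section Order

variable {ι : Type}

/-- Strict order associated to `le`. -/
def sLT (le : ι → ι → Prop) (a b : ι) : Prop := le a b ∧ a ≠ b

/-- `a ◁ b` : `a < b` and `a`, `b` are neighbours with respect to `le`. -/
def Nbr (le : ι → ι → Prop) (a b : ι) : Prop :=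
  sLT le a b ∧ ∀ c, le a c → le c b → c = a ∨ c = b

end Order

section Filtrations

variable (K : Type) [Field K] (A : Type) [Ring A] [Algebra K A] {ι : Type}

/-- A filtration of `M` by submodules all of whose subquotients are isomorphic to
members of the family `F` (e.g. a `Δ`-good or `∇`-good filtration). -/
structure GoodFilt (M : Type) [AddCommGroup M] [Module A M]
    (F : ι → ModuleCat.{0} A) : Type where
  len : ℕ
  D : Fin (len + 1) → Submodule A M
  mono : Monotone D
  first : D 0 = ⊥
  last : D (Fin.last len) = ⊤
  quotGood : ∀ t : Fin len, ∃ i : ι,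
    Nonempty (subQuot A (D t.castSucc) (D t.succ) ≃ₗ[A] ↥(F i))

end Filtrations

/-- The multiplicity `(M : F(i))` of `F i` in a good filtration: the number of
subquotients isomorphic to `F i`. -/
def GoodFilt.cnt {A : Type} [Ring A] {ι : Type} {M : Type} [AddCommGroup M]
    [Module A M] {F : ι → ModuleCat.{0} A} (fl : GoodFilt A M F) (i : ι) : ℕ :=
  Nat.card {t : Fin fl.len //
    Nonempty (subQuot A (fl.D t.castSucc) (fl.D t.succ) ≃ₗ[A] ↥(F i))}

section Filtrations
variable (K : Type) [Field K] (A : Type) [Ring A] [Algebra K A] {ι : Type}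

/-- A Jordan–Hölder filtration (composition series) of `M`. -/
structure JHFilt (M : Type) [AddCommGroup M] [Module A M] : Type where
  len : ℕ
  D : Fin (len + 1) → Submodule A M
  mono : Monotone D
  first : D 0 = ⊥
  last : D (Fin.last len) = ⊤
  simple : ∀ t : Fin len, IsSimpleModule A (subQuot A (D t.castSucc) (D t.succ))

/-- The family of standard modules, as objects of `ModuleCat A`. -/
def Dcat (le : ι → ι → Prop) (e : ι → A) : ι → ModuleCat.{0} A :=
  fun i => ModuleCat.of A (Dmod K A le e i)

/-- The family of costandard modules relative to a choice `Ifam` of injective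
envelopes, as objects of `ModuleCat A`. -/
def Ncat (le : ι → ι → Prop) (e : ι → A) (Ifam : ι → Type)
    [∀ l, AddCommGroup (Ifam l)] [∀ l, Module K (Ifam l)] [∀ l, Module A (Ifam l)]
    [∀ l, IsScalarTower K A (Ifam l)] : ι → ModuleCat.{0} A :=
  fun i => ModuleCat.of A ↥(nabla K A le e i (Ifam i))

end Filtrations

section QH

variable (K : Type) [Field K] (A : Type) [Ring A] [Algebra K A]
variable {ι : Type} [Fintype ι]

/-- `A` (given by the complete set `e` of primitive orthogonal idempotents of a
basic algebra, and the partial order `le` on the vertex set `ι`) is a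
1-quasi-hereditary algebra. -/
structure OneQH (le : ι → ι → Prop) (e : ι → A) : Prop where
  /- finite dimensional algebra -/
  fd : FiniteDimensional K A
  /- `le` is a partial order on the vertex set -/
  le_refl : ∀ i, le i i
  le_trans : ∀ i j k, le i j → le j k → le i k
  le_antisymm : ∀ i j, le i j → le j i → i = j
  /- `e` is a complete set of primitive orthogonal idempotents, `A` basic -/
  idem : ∀ i, e i * e i = e i
  orth : ∀ i j, i ≠ j → e i * e j = 0
  sum_one : ∑ i, e i = 1
  simple : ∀ i, IsSimpleModule A (Smod A e i)
  basic : ∀ i j, Nonempty (Smod A e i ≃ₗ[A] Smod A e j) → i = j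
  allSimple : ∀ (M : Type) [AddCommGroup M] [Module A M], IsSimpleModule A M →
      ∃ i, Nonempty (M ≃ₗ[A] Smod A e i)
  /- (1) there is a smallest and a largest element -/
  ex_min : ∃ m, ∀ i, le m i
  ex_max : ∃ m, ∀ i, le i m
  /- quasi-heredity and axiom (2): `[Δ(i):S(j)] = (P(j):Δ(i)) = 1` for `j ≤ i`,
     and `(P(j):Δ(i)) = 0` unless `i ≥ j` -/
  delta_mult : ∀ i j, le j i → cmult K A (e j) (Dmod K A le e i) = 1
  pgood : ∀ j, Nonempty (GoodFilt A ↥(Pmod A e j) (Dcat K A le e))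
  pmult_one : ∀ j i, le j i →
      ∀ fl : GoodFilt A ↥(Pmod A e j) (Dcat K A le e), fl.cnt i = 1
  pmult_zero : ∀ j i, ¬ le j i →
      ∀ fl : GoodFilt A ↥(Pmod A e j) (Dcat K A le e), fl.cnt i = 0
  /- (3) `soc P(j) ≅ S(min)` and `top I(j) ≅ S(min)` -/
  soc_p : ∀ m, (∀ i, le m i) → ∀ j,
      Nonempty (↥(socM A ↥(Pmod A e j)) ≃ₗ[A] Smod A e m)
  top_i : ∀ m, (∀ i, le m i) → ∀ j, ∀ (Ij : Type) [AddCommGroup Ij] [Module K Ij]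
      [Module A Ij] [IsScalarTower K A Ij], IsInjEnv A e j Ij →
      Nonempty (topM A Ij ≃ₗ[A] Smod A e m)
  /- (4) `Δ(i) ↪ Δ(max)` and `∇(max) ↠ ∇(i)` -/
  delta_emb : ∀ mx, (∀ i, le i mx) → ∀ i,
      ∃ f : Dmod K A le e i →ₗ[A] Dmod K A le e mx, Function.Injective f
  nabla_surj : ∀ mx, (∀ i, le i mx) → ∀ i,
      ∀ (Imx Ii : Type) [AddCommGroup Imx] [Module K Imx] [Module A Imx]
        [IsScalarTower K A Imx] [AddCommGroup Ii] [Module K Ii] [Module A Ii]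
        [IsScalarTower K A Ii],
      IsInjEnv A e mx Imx → IsInjEnv A e i Ii →
      ∃ g : ↥(nabla K A le e mx Imx) →ₗ[A] ↥(nabla K A le e i Ii),
        Function.Surjective g

end QH
section Quiver

/-- Paths in a quiver with vertex set `ι` and arrow sets `Arr a b`. -/
inductive PathIn {ι : Type} (Arr : ι → ι → Type) : ι → ι → Type
  | nil (a : ι) : PathIn Arr a a
  | cons {a b c : ι} (p : PathIn Arr a b) (α : Arr b c) : PathIn Arr a c

variable {ι : Type} {Arr : ι → ι → Type}

/-- Evaluation of a path in an algebra `A`, given the images `e` of the trivial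
paths and `arr` of the arrows.  A path `a → ⋯ → b` lands in `e b * A * e a`. -/
def PathIn.eval (A : Type) [Ring A] (e : ι → A) (arr : ∀ a b : ι, Arr a b → A) :
    ∀ {a b : ι}, PathIn Arr a b → A
  | _, _, .nil a => e a
  | _, _, .cons (b := b) (c := c) p α => arr b c α * PathIn.eval A e arr p

/-- A path is increasing with respect to the strict relation `lt`. -/
def PathIn.Up (lt : ι → ι → Prop) : ∀ {a b : ι}, PathIn Arr a b → Prop
  | _, _, .nil _ => True
  | _, _, .cons (b := b) (c := c) p _ => PathIn.Up lt p ∧ lt b c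

/-- Concatenation of paths. -/
def PathIn.comp {a b c : ι} (p : PathIn Arr a b) : PathIn Arr b c → PathIn Arr a c
  | .nil _ => p
  | .cons q α => .cons (p.comp q) α

/-- A path `p` from `j` to `k` is of the form `p(j,i,k)`: an increasing path from
`j` to `i` followed by a decreasing path from `i` to `k`
(`j = j₁ < ⋯ < jₘ < i > k₁ > ⋯ > kᵣ = k`). -/
def IsHook (le : ι → ι → Prop) {j k : ι} (i : ι) (p : PathIn Arr j k) : Prop :=
  ∃ (p₁ : PathIn Arr j i) (p₂ : PathIn Arr i k),
    p₁.Up (sLT le) ∧ p₂.Up (fun a b => sLT le b a) ∧ p = p₁.comp p₂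

/-- The evaluation of a path starting at `j` lies in `P(j) = A e_j`. -/
lemma eval_mem_Pmod (A : Type) [Ring A] (e : ι → A) (arr : ∀ a b : ι, Arr a b → A)
    {j k : ι} (p : PathIn Arr j k) : PathIn.eval A e arr p ∈ Pmod A e j := by
  induction p with
  | nil =>
      simp only [PathIn.eval, Pmod]
      exact Submodule.mem_span_singleton_self _
  | cons p α ih =>
      simp only [PathIn.eval]
      simpa [smul_eq_mul] using Submodule.smul_mem _ (arr _ _ α) ih

end Quiver
section Factor

variable (K : Type) [Field K] (A : Type) [Ring A] [Algebra K A] {ι : Type}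

/-- The two-sided ideal `J(i) = A (∑_{l ∉ Λ_(i)} e_l) A` (as a left submodule of
`A`; it is closed under right multiplication). -/
def Jset (le : ι → ι → Prop) (e : ι → A) (i : ι) : Submodule A A :=
  Submodule.span A {x | ∃ l b, ¬ le l i ∧ x = e l * b}

/-- The ring congruence associated to the two-sided ideal `J(i)`. -/
def Jcon (le : ι → ι → Prop) (e : ι → A) (i : ι) : RingCon A :=
  ringConGen (fun a b => a - b ∈ Jset A le e i)

/-- The factor algebra `A(i) = A / J(i)`. -/
abbrev Afac (le : ι → ι → Prop) (e : ι → A) (i : ι) : Type := (Jcon A le e i).Quotient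

noncomputable instance (le : ι → ι → Prop) (e : ι → A) (i : ι) :
    Algebra K (Afac A le e i) :=
  RingHom.toAlgebra' ((Jcon A le e i).mk'.comp (algebraMap K A)) (by
    intro k x
    induction x using Quot.ind with
    | _ a =>
      show (Jcon A le e i).mk' (algebraMap K A k) * (Jcon A le e i).mk' a =
        (Jcon A le e i).mk' a * (Jcon A le e i).mk' (algebraMap K A k)
      rw [← map_mul, ← map_mul, Algebra.commutes])

/-- A module is annihilated by (the left ideal) `Jd`, i.e. it is a module over
the factor algebra `A/Jd`. -/
def KilledBy (Jd : Submodule A A) (M : Type) [AddCommGroup M] [Module A M] : Prop :=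
  ∀ x ∈ Jd, ∀ m : M, x • m = 0

/-- `M` is an injective object in the category of `A`-modules annihilated by the
two-sided ideal `Jd`, i.e. an injective `A/Jd`-module. -/
def RelInjective (Jd : Submodule A A) (M : Type) [AddCommGroup M] [Module A M] : Prop :=
  ∀ (X Y : Type) [AddCommGroup X] [Module A X] [AddCommGroup Y] [Module A Y],
    KilledBy A Jd X → KilledBy A Jd Y →
    ∀ (f : X →ₗ[A] Y), Function.Injective f →
    ∀ (g : X →ₗ[A] M), ∃ h : Y →ₗ[A] M, ∀ x, h (f x) = g x

/-- `M` is indecomposable (and nonzero). -/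
def Indecomp (M : Type) [AddCommGroup M] [Module A M] : Prop :=
  (⊤ : Submodule A M) ≠ ⊥ ∧
  ∀ N N' : Submodule A M, IsCompl N N' → N = ⊥ ∨ N' = ⊥

/-- `T` is (a copy of) the indecomposable direct summand `T(i)` of the
characteristic tilting module: the unique indecomposable module which is both
`Δ`-good and `∇`-good, with `(T(i):Δ(j)) = (T(i):∇(j)) = 0` for `j ≰ i` and
`(T(i):Δ(i)) = (T(i):∇(i)) = 1`; here the costandard modules are computed inside
a chosen family `Ifam` of injective envelopes. -/
def IsTiltSummand (le : ι → ι → Prop) (e : ι → A) (Ifam : ι → Type)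
    [∀ l, AddCommGroup (Ifam l)] [∀ l, Module K (Ifam l)] [∀ l, Module A (Ifam l)]
    [∀ l, IsScalarTower K A (Ifam l)] (i : ι) (T : Type) [AddCommGroup T]
    [Module A T] : Prop :=
  Indecomp A T ∧
  Nonempty (GoodFilt A T (Dcat K A le e)) ∧
  Nonempty (GoodFilt A T (Ncat K A le e Ifam)) ∧
  (∀ j, ¬ le j i →
    (∀ fl : GoodFilt A T (Dcat K A le e), fl.cnt j = 0) ∧
    (∀ fl : GoodFilt A T (Ncat K A le e Ifam), fl.cnt j = 0)) ∧
  (∀ fl : GoodFilt A T (Dcat K A le e), fl.cnt i = 1) ∧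
  (∀ fl : GoodFilt A T (Ncat K A le e Ifam), fl.cnt i = 1)

end Factor
section FreeAlg

variable (K : Type) [Field K] {ι : Type} (Arr : ι → ι → Type)

/-- The free `K`-algebra on the vertices and arrows of the quiver;
the path algebra `KQ` is its quotient by the quiver relations `quiverRels`. -/
abbrev FreeQ : Type := FreeAlgebra K (ι ⊕ Σ a : ι, Σ b : ι, Arr a b)

/-- The generator corresponding to the trivial path at a vertex. -/
def genV (i : ι) : FreeQ K Arr := FreeAlgebra.ι K (Sum.inl i)

/-- The generator corresponding to an arrow. -/
def genA (a b : ι) (α : Arr a b) : FreeQ K Arr := FreeAlgebra.ι K (Sum.inr ⟨a, b, α⟩)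

/-- The defining relations of the path algebra `KQ` as a quotient of the free
algebra on vertices and arrows: the `e_i` are orthogonal idempotents summing to
`1`, and `e_b · α · e_a = α` for an arrow `α : a → b`. -/
def quiverRels [Fintype ι] : Set (FreeQ K Arr) :=
  {x | ∃ i, x = genV K Arr i * genV K Arr i - genV K Arr i} ∪
  {x | ∃ i j, i ≠ j ∧ x = genV K Arr i * genV K Arr j} ∪
  {x | x = 1 - ∑ i : ι, genV K Arr i} ∪
  {x | ∃ a b α, x = genV K Arr b * genA K Arr a b α * genV K Arr a - genA K Arr a b α}

variable (A : Type) [Ring A] [Algebra K A]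

/-- The canonical map from the free algebra on vertices and arrows to `A`,
sending the vertex generators to the idempotents `e i` and the arrow generators
to the chosen arrow elements of `A`. -/
def toA (e : ι → A) (arr : ∀ a b : ι, Arr a b → A) : FreeQ K Arr →ₐ[K] A :=
  FreeAlgebra.lift K (fun g => Sum.rec (fun i => e i) (fun s => arr s.1 s.2.1 s.2.2) g)

/-- The two-sided ideal generated by a subset of a (noncommutative) ring,
as a left ideal. -/
def tsSpan (R : Type) [Ring R] (S : Set R) : Ideal R :=
  Ideal.span {x | ∃ r ∈ S, ∃ y, x = r * y}

end FreeAlg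

section MyAux

variable {K A : Type} [Field K] [Ring A] [Algebra K A]

/-- A-linear maps preserve the K-action coming through the tower. -/
lemma my_map_ksmul {M N : Type} [AddCommGroup M] [Module K M] [Module A M]
    [IsScalarTower K A M] [AddCommGroup N] [Module K N] [Module A N]
    [IsScalarTower K A N] (f : M →ₗ[A] N) (k : K) (m : M) :
    f (k • m) = k • f m := by
  rw [← algebraMap_smul A k m, map_smul, algebraMap_smul]

/-- `SMulCommClass A K M` from the tower. -/
lemma my_smulComm (M : Type) [AddCommGroup M] [Module K M] [Module A M]
    [IsScalarTower K A M] : SMulCommClass A K M := by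
  constructor
  intro a k m
  rw [← algebraMap_smul A k m, ← mul_smul, ← Algebra.commutes, mul_smul, algebraMap_smul]

/-- Upgrade an A-linear equiv to a K-linear equiv. -/
def my_kequiv {M N : Type} [AddCommGroup M] [Module K M] [Module A M]
    [IsScalarTower K A M] [AddCommGroup N] [Module K N] [Module A N]
    [IsScalarTower K A N] (f : M ≃ₗ[A] N) : M ≃ₗ[K] N :=
  { f.toAddEquiv with
    map_smul' := fun k m => my_map_ksmul (f : M →ₗ[A] N) k m }

/-- cmult is invariant under A-linear isomorphism. -/
lemma my_cmult_congr (a : A) {M N : Type} [AddCommGroup M] [Module K M] [Module A M]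
    [IsScalarTower K A M] [AddCommGroup N] [Module K N] [Module A N]
    [IsScalarTower K A N] (f : M ≃ₗ[A] N) : cmult K A a M = cmult K A a N := by
  have hmap : (LinearMap.range (hitK K A a M)).map
      ((my_kequiv (K := K) f).toLinearMap) = LinearMap.range (hitK K A a N) := by
    apply le_antisymm
    · rintro x ⟨y, ⟨m, rfl⟩, rfl⟩
      exact ⟨f m, (f.map_smul a m).symm⟩
    · rintro x ⟨n, rfl⟩
      exact ⟨a • f.symm n, ⟨f.symm n, rfl⟩, by
        show (my_kequiv f) (a • f.symm n) = a • n
        show f (a • f.symm n) = a • n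
        rw [f.map_smul, f.apply_symm_apply]⟩
  unfold cmult
  rw [← hmap]
  exact LinearEquiv.finrank_eq ((my_kequiv (K := K) f).submoduleMap
    (LinearMap.range (hitK K A a M)))

lemma my_cmult_zero_of_subsingleton (a : A) (M : Type) [AddCommGroup M] [Module K M]
    [Module A M] [IsScalarTower K A M] [Subsingleton M] : cmult K A a M = 0 := by
  unfold cmult
  have : LinearMap.range (hitK K A a M) = ⊥ := Subsingleton.elim _ _
  rw [this, finrank_bot]

lemma my_cmult_eq_zero_iff (a : A) (M : Type) [AddCommGroup M] [Module K M]
    [Module A M] [IsScalarTower K A M] [FiniteDimensional K M] :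
    cmult K A a M = 0 ↔ ∀ m : M, a • m = 0 := by
  unfold cmult
  rw [Submodule.finrank_eq_zero, LinearMap.range_eq_bot]
  constructor
  · intro h m; exact DFunLike.congr_fun h m
  · intro h; ext m; exact h m

end MyAux

section MyAux2

variable {K A : Type} [Field K] [Ring A] [Algebra K A]

lemma my_fdSub {M : Type} [AddCommGroup M] [Module K M] [Module A M]
    [IsScalarTower K A M] [FiniteDimensional K M] (N : Submodule A M) :
    FiniteDimensional K ↥N :=
  FiniteDimensional.of_injective (N.subtype.restrictScalars K) Subtype.val_injective

lemma my_fdQuot {M : Type} [AddCommGroup M] [Module K M] [Module A M]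
    [IsScalarTower K A M] [FiniteDimensional K M] (N : Submodule A M) :
    FiniteDimensional K (M ⧸ N) :=
  Module.Finite.of_surjective (N.mkQ.restrictScalars K) N.mkQ_surjective

/-- Additivity of `cmult` for an idempotent along a submodule. -/
lemma my_cmult_add (a : A) (ha : a * a = a) {M : Type} [AddCommGroup M] [Module K M]
    [Module A M] [IsScalarTower K A M] [FiniteDimensional K M] (N : Submodule A M) :
    cmult K A a M = cmult K A a ↥N + cmult K A a (M ⧸ N) := by
  classical
  set R : Submodule K M := LinearMap.range (hitK K A a M) with hR
  haveI : FiniteDimensional K ↥R := inferInstance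
  set ψ : ↥R →ₗ[K] (M ⧸ N) := (N.mkQ.restrictScalars K).comp R.subtype with hψ
  have hrange : LinearMap.range ψ = LinearMap.range (hitK K A a (M ⧸ N)) := by
    apply le_antisymm
    · rintro x ⟨⟨m, ⟨m₀, rfl⟩⟩, rfl⟩
      exact ⟨Submodule.Quotient.mk m₀, (Submodule.Quotient.mk_smul N a m₀).symm⟩
    · rintro x ⟨q, rfl⟩
      obtain ⟨m₀, rfl⟩ := Submodule.Quotient.mk_surjective N q
      refine ⟨⟨a • m₀, ⟨m₀, rfl⟩⟩, ?_⟩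
      show N.mkQ (a • m₀) = a • Submodule.Quotient.mk m₀
      simp [Submodule.Quotient.mk_smul]
  -- kernel of ψ is K-isomorphic to the range of hitK on N
  have hsmul : ∀ m : M, m ∈ R → a • m = m := by
    rintro m ⟨m₀, rfl⟩
    show a • a • m₀ = a • m₀
    rw [← mul_smul, ha]
  set e : ↥(LinearMap.ker ψ) →ₗ[K] ↥(LinearMap.range (hitK K A a ↥N)) :=
    { toFun := fun x => ⟨⟨(x.1 : M), by
        have : N.mkQ (x.1 : M) = 0 := x.2
        exact (Submodule.Quotient.mk_eq_zero N).1 this⟩, by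
        refine ⟨⟨(x.1 : M), ?_⟩, ?_⟩
        · have : N.mkQ (x.1 : M) = 0 := x.2
          exact (Submodule.Quotient.mk_eq_zero N).1 this
        · apply Subtype.ext
          exact hsmul _ x.1.2⟩
      map_add' := fun x y => by apply Subtype.ext; apply Subtype.ext; rfl
      map_smul' := fun k x => by apply Subtype.ext; apply Subtype.ext; rfl } with he
  have hinj : Function.Injective e := by
    intro x y hxy
    apply Subtype.ext; apply Subtype.ext
    have := congrArg (fun z : ↥(LinearMap.range (hitK K A a ↥N)) => ((z : ↥N) : M)) hxy
    exact this
  have hsurj : Function.Surjective e := by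
    rintro ⟨⟨n, hn⟩, ⟨n₀, hn₀⟩⟩
    have hnval : (n : M) = a • (n₀ : M) := congrArg Subtype.val hn₀.symm
    refine ⟨⟨⟨n, ⟨(n₀ : M), hnval.symm⟩⟩, ?_⟩, ?_⟩
    · show N.mkQ n = 0
      exact (Submodule.Quotient.mk_eq_zero N).2 hn
    · apply Subtype.ext; apply Subtype.ext; rfl
  have hker : Module.finrank K ↥(LinearMap.ker ψ) = cmult K A a ↥N :=
    LinearEquiv.finrank_eq (LinearEquiv.ofBijective e ⟨hinj, hsurj⟩)
  have hrk := LinearMap.finrank_range_add_finrank_ker ψ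
  unfold cmult
  rw [hrange] at hrk
  unfold cmult at hker
  rw [← hR]
  omega

end MyAux2

section MyAux3

variable {K A : Type} [Field K] [Ring A] [Algebra K A]

/-- `cmult` of a filtered module is the sum of the `cmult`s of the subquotients. -/
lemma my_cmult_filt (a : A) (ha : a * a = a) {M : Type} [AddCommGroup M] [Module K M]
    [Module A M] [IsScalarTower K A M] [FiniteDimensional K M] {len : ℕ}
    (D : Fin (len + 1) → Submodule A M) (mono : Monotone D) (first : D 0 = ⊥)
    (last : D (Fin.last len) = ⊤) :
    cmult K A a M = ∑ t : Fin len, cmult K A a (subQuot A (D t.castSucc) (D t.succ)) := by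
  classical
  have claim : ∀ t : Fin (len + 1), cmult K A a ↥(D t) =
      ∑ s : Fin len, if (s : ℕ) < (t : ℕ) then
        cmult K A a (subQuot A (D s.castSucc) (D s.succ)) else 0 := by
    intro t
    induction t using Fin.induction with
    | zero =>
        have e1 : ↥(D 0) ≃ₗ[A] ↥(⊥ : Submodule A M) := LinearEquiv.ofEq _ _ first
        rw [my_cmult_congr a e1, my_cmult_zero_of_subsingleton]
        rw [Finset.sum_eq_zero]
        intro s _
        simp
    | succ i ih =>
        haveI : FiniteDimensional K ↥(D i.succ) := my_fdSub _
        have hle : D i.castSucc ≤ D i.succ := mono (Fin.castSucc_le_succ i)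
        have hadd := my_cmult_add (K := K) a ha
          (M := ↥(D i.succ)) (Submodule.comap (D i.succ).subtype (D i.castSucc))
        have hN : cmult K A a ↥(Submodule.comap (D i.succ).subtype (D i.castSucc))
            = cmult K A a ↥(D i.castSucc) :=
          my_cmult_congr a (Submodule.comapSubtypeEquivOfLe hle)
        rw [hadd, hN, ih]
        have hsplit : ∀ s : Fin len,
            (if (s : ℕ) < (i.succ : ℕ) then
              cmult K A a (subQuot A (D s.castSucc) (D s.succ)) else 0)
            = (if (s : ℕ) < (i.castSucc : ℕ) then
              cmult K A a (subQuot A (D s.castSucc) (D s.succ)) else 0)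
            + (if s = i then cmult K A a (subQuot A (D s.castSucc) (D s.succ)) else 0) := by
          intro s
          by_cases hs : s = i
          · subst hs
            simp [Fin.val_succ, Fin.coe_castSucc]
          · have hsi : (s : ℕ) ≠ (i : ℕ) := fun hh => hs (Fin.ext hh)
            have : ((s : ℕ) < (i.succ : ℕ)) ↔ ((s : ℕ) < (i.castSucc : ℕ)) := by
              rw [Fin.val_succ, Fin.coe_castSucc]
              omega
            rw [if_neg hs, add_zero, if_congr this rfl rfl]
        rw [Finset.sum_congr rfl (fun s _ => hsplit s), Finset.sum_add_distrib,
          Finset.sum_ite_eq' Finset.univ i]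
        simp [add_comm]
  have e2 : ↥(D (Fin.last len)) ≃ₗ[A] M :=
    (LinearEquiv.ofEq _ _ last).trans (Submodule.topEquiv)
  have := claim (Fin.last len)
  rw [my_cmult_congr a e2] at this
  rw [this]
  apply Finset.sum_congr rfl
  intro s _
  rw [if_pos]
  exact s.isLt

end MyAux3

section MyAux4

variable {K A ι : Type} [Field K] [Ring A] [Algebra K A]

/-- `[Δ(i) : S(k)] = 0` when `¬ k ≤ i`. -/
lemma my_cmult_Dmod_zero (le : ι → ι → Prop) (e : ι → A) [FiniteDimensional K A]
    {i k : ι} (hk : ¬ le k i) : cmult K A (e k) (Dmod K A le e i) = 0 := by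
  haveI : FiniteDimensional K ↥(Pmod A e i) := my_fdSub _
  haveI : FiniteDimensional K (Dmod K A le e i) := my_fdQuot _
  rw [my_cmult_eq_zero_iff]
  intro m
  obtain ⟨x, rfl⟩ := Submodule.Quotient.mk_surjective _ m
  rw [← Submodule.Quotient.mk_smul, Submodule.Quotient.mk_eq_zero]
  rw [delKer, Submodule.mem_sInf]
  intro N hN
  haveI : FiniteDimensional K (↥(Pmod A e i) ⧸ N) := my_fdQuot _
  have h0 := (my_cmult_eq_zero_iff (K := K) (e k) (↥(Pmod A e i) ⧸ N)).1 (hN k hk)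
  have := h0 (Submodule.Quotient.mk x)
  rw [← Submodule.Quotient.mk_smul, Submodule.Quotient.mk_eq_zero] at this
  exact this

/-- Distinct vertices have non-isomorphic standard modules. -/
lemma my_Dmod_inj [Fintype ι] {le : ι → ι → Prop} {e : ι → A} (h : OneQH K A le e)
    {i i' : ι} (hiso : Nonempty (Dmod K A le e i ≃ₗ[A] Dmod K A le e i')) : i = i' := by
  haveI := h.fd
  obtain ⟨g⟩ := hiso
  apply h.le_antisymm
  · by_contra hc
    have h1 : cmult K A (e i) (Dmod K A le e i') = 0 := my_cmult_Dmod_zero le e hc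
    rw [← my_cmult_congr (e i) g] at h1
    rw [h.delta_mult i i (h.le_refl i)] at h1
    exact one_ne_zero h1
  · by_contra hc
    have h1 : cmult K A (e i') (Dmod K A le e i) = 0 := my_cmult_Dmod_zero le e hc
    rw [my_cmult_congr (e i') g] at h1
    rw [h.delta_mult i' i' (h.le_refl i')] at h1
    exact one_ne_zero h1

/-- Part 1: `[P(j) : S(k)] = |Λ^(j) ∩ Λ^(k)|`. -/
lemma my_part1 [Fintype ι] {le : ι → ι → Prop} {e : ι → A} (h : OneQH K A le e)
    (j k : ι) : cmult K A (e k) ↥(Pmod A e j) = Set.ncard {i | le j i ∧ le k i} := by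
  classical
  haveI := h.fd
  haveI : FiniteDimensional K ↥(Pmod A e j) := my_fdSub _
  obtain ⟨fl⟩ := h.pgood j
  rw [my_cmult_filt (e k) (h.idem k) fl.D fl.mono fl.first fl.last]
  set F : Fin fl.len → ι := fun t => (fl.quotGood t).choose with hF
  have iso_t : ∀ t, Nonempty (subQuot A (fl.D t.castSucc) (fl.D t.succ)
      ≃ₗ[A] Dmod K A le e (F t)) := fun t => (fl.quotGood t).choose_spec
  have hcm : ∀ t, cmult K A (e k) (subQuot A (fl.D t.castSucc) (fl.D t.succ))
      = if le k (F t) then 1 else 0 := by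
    intro t
    obtain ⟨g⟩ := iso_t t
    rw [my_cmult_congr (e k) g]
    by_cases hkt : le k (F t)
    · rw [if_pos hkt, h.delta_mult _ _ hkt]
    · rw [if_neg hkt, my_cmult_Dmod_zero le e hkt]
  -- the fibers of F compute the filtration multiplicities
  have hfib : ∀ i, (Finset.univ.filter fun t => F t = i).card = fl.cnt i := by
    intro i
    have : ∀ t : Fin fl.len, (F t = i) ↔
        Nonempty (subQuot A (fl.D t.castSucc) (fl.D t.succ) ≃ₗ[A] ↥(Dcat K A le e i)) := by
      intro t
      constructor
      · rintro rfl; exact iso_t t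
      · rintro ⟨g⟩
        obtain ⟨g₀⟩ := iso_t t
        exact my_Dmod_inj h ⟨g₀.symm.trans
          (g : subQuot A (fl.D t.castSucc) (fl.D t.succ) ≃ₗ[A] Dmod K A le e i)⟩
    rw [GoodFilt.cnt, Nat.card_eq_fintype_card, Fintype.card_subtype]
    apply Finset.card_bij (fun t _ => t) <;> simp_all
  have hcnt : ∀ i, le k i → (Finset.univ.filter fun t => F t = i).card
      = if le j i then 1 else 0 := by
    intro i _
    rw [hfib i]
    by_cases hji : le j i
    · rw [if_pos hji, h.pmult_one j i hji fl]
    · rw [if_neg hji, h.pmult_zero j i hji fl]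
  calc ∑ t : Fin fl.len, cmult K A (e k) (subQuot A (fl.D t.castSucc) (fl.D t.succ))
      = ∑ t : Fin fl.len, if le k (F t) then 1 else 0 :=
        Finset.sum_congr rfl (fun t _ => hcm t)
    _ = (Finset.univ.filter fun t => le k (F t)).card := by
        rw [Finset.card_filter]
    _ = ∑ i ∈ Finset.univ.filter fun i => le k i,
          ((Finset.univ.filter fun t => le k (F t)).filter fun t => F t = i).card := by
        apply Finset.card_eq_sum_card_fiberwise
        intro t ht
        simp only [Finset.coe_filter, Finset.mem_coe, Set.mem_setOf_eq, Finset.mem_filter, Finset.mem_univ, true_and] at ht ⊢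
        exact ht
    _ = ∑ i ∈ Finset.univ.filter fun i => le k i,
          (Finset.univ.filter fun t => F t = i).card := by
        apply Finset.sum_congr rfl
        intro i hi
        simp only [Finset.mem_filter, Finset.mem_univ, true_and] at hi
        congr 1
        ext t
        simp only [Finset.mem_filter, Finset.mem_univ, true_and, and_iff_right_iff_imp]
        rintro rfl
        exact hi
    _ = ∑ i ∈ Finset.univ.filter fun i => le k i, (if le j i then 1 else 0) := by
        apply Finset.sum_congr rfl
        intro i hi
        simp only [Finset.mem_filter, Finset.mem_univ, true_and] at hi
        exact hcnt i hi
    _ = (Finset.univ.filter fun i => le j i ∧ le k i).card := by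
        rw [Finset.card_filter, Finset.sum_filter]
        apply Finset.sum_congr rfl
        intro i _
        by_cases hki : le k i <;> by_cases hji : le j i <;> simp [hki, hji]
    _ = Set.ncard {i | le j i ∧ le k i} := by
        rw [show {i | le j i ∧ le k i}
          = ↑(Finset.univ.filter fun i => le j i ∧ le k i) by ext i; simp,
          Set.ncard_coe_finset]

end MyAux4

section MyAux5

variable {K A : Type} [Field K] [Ring A] [Algebra K A]

instance (priority := 50) my_smulCommInst {M : Type} [AddCommGroup M] [Module K M]
    [Module A M] [IsScalarTower K A M] : SMulCommClass A K M := my_smulComm M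

/-- Hom spaces between finite-dimensional modules are finite dimensional. -/
lemma my_fdHom (M N : Type) [AddCommGroup M] [Module K M] [Module A M]
    [IsScalarTower K A M] [AddCommGroup N] [Module K N] [Module A N]
    [IsScalarTower K A N] [FiniteDimensional K M] [FiniteDimensional K N] :
    FiniteDimensional K (M →ₗ[A] N) := by
  let Φ : (M →ₗ[A] N) →ₗ[K] (M →ₗ[K] N) :=
    { toFun := fun f => f.restrictScalars K
      map_add' := fun f g => rfl
      map_smul' := fun k f => rfl }
  exact FiniteDimensional.of_injective Φ (LinearMap.restrictScalars_injective K)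

/-- Post-composition with an A-linear iso gives a K-linear iso of Hom spaces. -/
def my_homCongrRight {M N N' : Type} [AddCommGroup M] [Module A M]
    [AddCommGroup N] [Module K N] [Module A N] [IsScalarTower K A N]
    [AddCommGroup N'] [Module K N'] [Module A N'] [IsScalarTower K A N']
    (g : N ≃ₗ[A] N') : (M →ₗ[A] N) ≃ₗ[K] (M →ₗ[A] N') where
  toFun f := g.toLinearMap ∘ₗ f
  invFun f := g.symm.toLinearMap ∘ₗ f
  map_add' f₁ f₂ := by ext m; simp
  map_smul' k f := by
    ext m
    exact my_map_ksmul g.toLinearMap k (f m)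
  left_inv f := by ext m; simp
  right_inv f := by ext m; simp

/-- Pre-composition with an A-linear iso gives a K-linear iso of Hom spaces. -/
def my_homCongrLeft {M M' N : Type} [AddCommGroup M] [Module A M]
    [AddCommGroup M'] [Module A M'] [AddCommGroup N] [Module K N] [Module A N]
    [IsScalarTower K A N] (g : M ≃ₗ[A] M') :
    (M →ₗ[A] N) ≃ₗ[K] (M' →ₗ[A] N) where
  toFun f := f ∘ₗ g.symm.toLinearMap
  invFun f := f ∘ₗ g.toLinearMap
  map_add' f₁ f₂ := by ext m; simp
  map_smul' k f := by ext m; rfl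
  left_inv f := by ext m; simp
  right_inv f := by ext m; simp

/-- `[M : S(l)] = dim Hom(P(l), M)`. -/
lemma my_cmult_eq_finrank_hom {ι : Type} (e : ι → A) (l : ι) (hl : e l * e l = e l)
    (M : Type) [AddCommGroup M] [Module K M] [Module A M] [IsScalarTower K A M] :
    cmult K A (e l) M = Module.finrank K (↥(Pmod A e l) →ₗ[A] M) := by
  classical
  have el_mem : e l ∈ Pmod A e l := Submodule.mem_span_singleton_self _
  set gen : ↥(Pmod A e l) := ⟨e l, el_mem⟩ with hgen
  have key : ∀ f : ↥(Pmod A e l) →ₗ[A] M, f gen = e l • f gen := by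
    intro f
    have : gen = e l • gen := by
      apply Subtype.ext
      show e l = e l • e l
      rw [smul_eq_mul, hl]
    conv_lhs => rw [this]
    rw [map_smul]
  let aux : M → (A →ₗ[A] M) := fun m =>
    { toFun := fun a => a • m
      map_add' := fun a b => add_smul a b m
      map_smul' := fun a b => mul_smul a b m }
  let E : (↥(Pmod A e l) →ₗ[A] M) ≃ₗ[K] ↥(LinearMap.range (hitK K A (e l) M)) :=
    { toFun := fun f => ⟨f gen, ⟨f gen, (key f).symm⟩⟩
      invFun := fun m => (aux m.1) ∘ₗ (Pmod A e l).subtype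
      map_add' := fun f₁ f₂ => rfl
      map_smul' := fun k f => rfl
      left_inv := by
        intro f
        ext x
        obtain ⟨a, ha⟩ := Submodule.mem_span_singleton.1 x.2
        have hx : x = a • gen := by
          apply Subtype.ext
          exact ha.symm
        show (x : A) • f gen = f x
        rw [hx, map_smul]
        show (a • e l) • f gen = a • f gen
        rw [smul_eq_mul, mul_smul, ← key f]
      right_inv := by
        rintro ⟨m, ⟨m₀, rfl⟩⟩
        apply Subtype.ext
        show e l • (e l • m₀) = e l • m₀
        rw [← mul_smul, hl] }
  rw [cmult, LinearEquiv.finrank_eq E.symm]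

end MyAux5

section MyAux6

variable {K A : Type} [Field K] [Ring A] [Algebra K A]

/-- For a simple codomain, Hom(P, S) ≅ Hom(top P, S). -/
lemma my_finrank_hom_top (P : Type) [AddCommGroup P] [Module A P] (S : Type)
    [AddCommGroup S] [Module K S] [Module A S] [IsScalarTower K A S]
    (hs : IsSimpleModule A S) :
    Module.finrank K ((topM A P) →ₗ[A] S) = Module.finrank K (P →ₗ[A] S) := by
  classical
  haveI := hs
  let Φ : ((topM A P) →ₗ[A] S) →ₗ[K] (P →ₗ[A] S) :=
    { toFun := fun f => f ∘ₗ (radM A P).mkQ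
      map_add' := fun f g => rfl
      map_smul' := fun k f => rfl }
  have hinj : Function.Injective Φ := by
    intro f g hfg
    ext m
    exact DFunLike.congr_fun hfg m
  have hsurj : Function.Surjective Φ := by
    intro f
    have hle : radM A P ≤ LinearMap.ker f := by
      by_cases hf : f = 0
      · rw [hf, LinearMap.ker_zero]; exact le_top
      · have hrange : LinearMap.range f = ⊤ := by
          rcases eq_bot_or_eq_top (LinearMap.range f) with hr | hr
          · exact absurd (LinearMap.range_eq_bot.1 hr) hf
          · exact hr
        have hsurjf : Function.Surjective f := LinearMap.range_eq_top.1 hrange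
        have : IsSimpleModule A (P ⧸ LinearMap.ker f) :=
          IsSimpleModule.congr (f.quotKerEquivOfSurjective hsurjf)
        have hco : IsCoatom (LinearMap.ker f) := isSimpleModule_iff_isCoatom.1 this
        exact sInf_le hco
    exact ⟨Submodule.liftQ _ f hle, Submodule.liftQ_mkQ _ f hle⟩
  exact LinearEquiv.finrank_eq (LinearEquiv.ofBijective Φ ⟨hinj, hsurj⟩)

/-- Hom between non-isomorphic simple modules vanishes. -/
lemma my_finrank_hom_simple_zero {S T : Type} [AddCommGroup S] [Module A S]
    [AddCommGroup T] [Module K T] [Module A T] [IsScalarTower K A T]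
    (hS : IsSimpleModule A S) (hT : IsSimpleModule A T)
    (hni : ¬ Nonempty (S ≃ₗ[A] T)) : Module.finrank K (S →ₗ[A] T) = 0 := by
  haveI := hS; haveI := hT
  have hzero : ∀ f : S →ₗ[A] T, f = 0 := by
    intro f
    by_contra hf
    have hker : LinearMap.ker f = ⊥ := by
      rcases eq_bot_or_eq_top (LinearMap.ker f) with hr | hr
      · exact hr
      · exact absurd (LinearMap.ker_eq_top.1 hr) hf
    have hrange : LinearMap.range f = ⊤ := by
      rcases eq_bot_or_eq_top (LinearMap.range f) with hr | hr
      · exact absurd (LinearMap.range_eq_bot.1 hr) hf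
      · exact hr
    exact hni ⟨LinearEquiv.ofBijective f
      ⟨LinearMap.ker_eq_bot.1 hker, LinearMap.range_eq_top.1 hrange⟩⟩
  haveI : Subsingleton (S →ₗ[A] T) := by
    constructor
    intro f g
    rw [hzero f, hzero g]
  exact Module.finrank_zero_of_subsingleton

/-- A map from a simple module lands in the socle. -/
lemma my_range_le_socle {S I : Type} [AddCommGroup S] [Module A S] [AddCommGroup I]
    [Module A I] (hS : IsSimpleModule A S) (f : S →ₗ[A] I) :
    LinearMap.range f ≤ socM A I := by
  haveI := hS
  by_cases hf : f = 0
  · subst hf; simp [socM]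
  · have hker : LinearMap.ker f = ⊥ := by
      rcases eq_bot_or_eq_top (LinearMap.ker f) with hr | hr
      · exact hr
      · exact absurd (LinearMap.ker_eq_top.1 hr) hf
    have : IsSimpleModule A ↥(LinearMap.range f) :=
      IsSimpleModule.congr (LinearEquiv.ofInjective f (LinearMap.ker_eq_bot.1 hker)).symm
    exact le_sSup (isSimpleModule_iff_isAtom.1 this)

/-- `Hom(S, I) ≅ Hom(S, soc I)` as K-spaces, for `S` simple. -/
def my_socCorestrict {S I : Type} [AddCommGroup S] [Module A S] [AddCommGroup I]
    [Module K I] [Module A I] [IsScalarTower K A I] (hS : IsSimpleModule A S) :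
    (S →ₗ[A] I) ≃ₗ[K] (S →ₗ[A] ↥(socM A I)) where
  toFun f := f.codRestrict (socM A I) (fun s => my_range_le_socle hS f ⟨s, rfl⟩)
  invFun g := (socM A I).subtype ∘ₗ g
  map_add' f g := by ext s; rfl
  map_smul' k f := by ext s; rfl
  left_inv f := by ext s; rfl
  right_inv g := by ext s; rfl

end MyAux6

section MyAux7

variable {K A ι : Type} [Field K] [Ring A] [Algebra K A] [Fintype ι]

lemma my_hom_simple {le : ι → ι → Prop} {e : ι → A} (h : OneQH K A le e) (j : ι)
    (I : Type) [AddCommGroup I] [Module K I] [Module A I] [IsScalarTower K A I]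
    (hI : IsInjEnv A e j I) (S' : Type) [AddCommGroup S'] [Module K S'] [Module A S']
    [IsScalarTower K A S'] [FiniteDimensional K S'] (hS' : IsSimpleModule A S') :
    FiniteDimensional K (S' →ₗ[A] I) ∧
      Module.finrank K (S' →ₗ[A] I) = cmult K A (e j) S' := by
  classical
  haveI := h.fd
  haveI : FiniteDimensional K ↥(Pmod A e j) := my_fdSub _
  haveI : FiniteDimensional K (Smod A e j) := my_fdQuot _
  obtain ⟨socIso⟩ := hI.2
  let E : (S' →ₗ[A] I) ≃ₗ[K] (S' →ₗ[A] Smod A e j) :=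
    (my_socCorestrict hS').trans (my_homCongrRight socIso)
  haveI : FiniteDimensional K (S' →ₗ[A] Smod A e j) := my_fdHom _ _
  refine ⟨Module.Finite.equiv E.symm, ?_⟩
  rw [LinearEquiv.finrank_eq E]
  rw [my_cmult_eq_finrank_hom e j (h.idem j) S',
    ← my_finrank_hom_top (↥(Pmod A e j)) S' hS']
  by_cases hiso : Nonempty (S' ≃ₗ[A] Smod A e j)
  · obtain ⟨g⟩ := hiso
    rw [LinearEquiv.finrank_eq (my_homCongrLeft (K := K) g),
      LinearEquiv.finrank_eq (my_homCongrRight (K := K) (M := Smod A e j) g.symm)]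
  · rw [my_finrank_hom_simple_zero hS' (h.simple j) hiso,
      my_finrank_hom_simple_zero (h.simple j) hS' (fun ⟨g⟩ => hiso ⟨g.symm⟩)]

end MyAux7

section MyAux8

variable {K A ι : Type} [Field K] [Ring A] [Algebra K A] [Fintype ι]

lemma my_hom_dim {le : ι → ι → Prop} {e : ι → A} (h : OneQH K A le e) (j : ι)
    (I : Type) [AddCommGroup I] [Module K I] [Module A I] [IsScalarTower K A I]
    (hI : IsInjEnv A e j I) :
    ∀ (M : Type) [AddCommGroup M] [Module K M] [Module A M] [IsScalarTower K A M]
      [FiniteDimensional K M],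
      FiniteDimensional K (M →ₗ[A] I) ∧
        Module.finrank K (M →ₗ[A] I) = cmult K A (e j) M := by
  classical
  suffices H : ∀ n : ℕ, ∀ (M : Type) [AddCommGroup M] [Module K M] [Module A M]
      [IsScalarTower K A M] [FiniteDimensional K M], Module.finrank K M = n →
      FiniteDimensional K (M →ₗ[A] I) ∧
        Module.finrank K (M →ₗ[A] I) = cmult K A (e j) M by
    intro M _ _ _ _ _
    exact H (Module.finrank K M) M rfl
  intro n
  induction n using Nat.strong_induction_on with
  | _ n ih =>
    intro M _ _ _ _ _ hn
    rcases subsingleton_or_nontrivial M with hM | hM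
    · haveI : Subsingleton (M →ₗ[A] I) := by
        constructor
        intro f g
        ext m
        rw [Subsingleton.elim m 0, map_zero, map_zero]
      refine ⟨FiniteDimensional.of_rank_eq_zero (rank_subsingleton' _ _), ?_⟩
      rw [Module.finrank_zero_of_subsingleton, my_cmult_zero_of_subsingleton]
    · haveI : IsArtinian A M := isArtinian_of_tower K inferInstance
      haveI : IsAtomic (Submodule A M) :=
        isAtomic_of_orderBot_wellFounded_lt wellFounded_lt
      have hne : (⊤ : Submodule A M) ≠ ⊥ := by
        intro hh
        have hz : ∀ x : M, x = 0 := fun x => (Submodule.mem_bot A).1 (hh ▸ Submodule.mem_top)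
        obtain ⟨x, y, hxy⟩ := hM
        exact hxy (by rw [hz x, hz y])
      obtain ⟨S, hS, -⟩ := (eq_bot_or_exists_atom_le (⊤ : Submodule A M)).resolve_left hne
      haveI : FiniteDimensional K ↥S := my_fdSub S
      haveI : FiniteDimensional K (M ⧸ S) := my_fdQuot S
      have hSsimple : IsSimpleModule A ↥S := isSimpleModule_iff_isAtom.2 hS
      haveI : Nontrivial ↥S := by
        obtain ⟨x, hx, hx0⟩ := Submodule.exists_mem_ne_zero_of_ne_bot hS.1
        exact ⟨⟨⟨x, hx⟩, 0, fun hc => hx0 (congrArg Subtype.val hc)⟩⟩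
      have hrkS : 0 < Module.finrank K ↥S := Module.finrank_pos
      -- dimension count
      let eS : ↥(S.restrictScalars K) ≃ₗ[K] ↥S :=
        { toFun := fun x => ⟨x.1, x.2⟩
          invFun := fun x => ⟨x.1, x.2⟩
          map_add' := fun _ _ => rfl
          map_smul' := fun _ _ => rfl
          left_inv := fun _ => rfl
          right_inv := fun _ => rfl }
      have hdecomp : Module.finrank K (M ⧸ S) + Module.finrank K ↥S
          = Module.finrank K M := by
        have := Submodule.finrank_quotient_add_finrank (S.restrictScalars K)
        rwa [LinearEquiv.finrank_eq (Submodule.Quotient.restrictScalarsEquiv K S),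
          LinearEquiv.finrank_eq eS] at this
      have hlt : Module.finrank K (M ⧸ S) < n := by omega
      obtain ⟨fdQ, hQ⟩ := ih _ hlt (M ⧸ S) rfl
      obtain ⟨fdS, hSdim⟩ := my_hom_simple h j I hI ↥S hSsimple
      -- restriction map
      let res : (M →ₗ[A] I) →ₗ[K] (↥S →ₗ[A] I) :=
        { toFun := fun f => f ∘ₗ S.subtype
          map_add' := fun _ _ => rfl
          map_smul' := fun _ _ => rfl }
      have hressurj : Function.Surjective res := by
        intro g
        obtain ⟨f', hf'⟩ := hI.1.out S.subtype (Submodule.injective_subtype S) g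
        exact ⟨f', by ext s; exact hf' s⟩
      -- kernel of res is Hom(M/S, I)
      let km : ↥(LinearMap.ker res) →ₗ[K] ((M ⧸ S) →ₗ[A] I) :=
        { toFun := fun x => Submodule.liftQ S x.1 (by
            intro m hm
            have := DFunLike.congr_fun x.2 (⟨m, hm⟩ : ↥S)
            exact this)
          map_add' := fun x y => by ext m; rfl
          map_smul' := fun k x => by ext m; rfl }
      have hkinj : Function.Injective km := by
        intro x y hxy
        apply Subtype.ext
        ext m
        have := DFunLike.congr_fun hxy (Submodule.Quotient.mk m)
        exact this
      have hksurj : Function.Surjective km := by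
        intro g
        refine ⟨⟨g ∘ₗ S.mkQ, ?_⟩, ?_⟩
        · ext s
          show g (Submodule.Quotient.mk (s : M)) = 0
          rw [(Submodule.Quotient.mk_eq_zero S).2 s.2, map_zero]
        · ext m
          rfl
      let kEquiv := LinearEquiv.ofBijective km ⟨hkinj, hksurj⟩
      haveI : FiniteDimensional K ↥(LinearMap.ker res) := Module.Finite.equiv kEquiv.symm
      haveI fdM : FiniteDimensional K (M →ₗ[A] I) := by
        haveI : IsNoetherian K ↥(LinearMap.ker res) := IsNoetherian.iff_fg.2 ‹_›
        haveI : IsNoetherian K (↥S →ₗ[A] I) := IsNoetherian.iff_fg.2 fdS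
        exact IsNoetherian.iff_fg.1 (isNoetherian_of_range_eq_ker
          (LinearMap.ker res).subtype res (Submodule.range_subtype _))
      refine ⟨fdM, ?_⟩
      have hrk := LinearMap.finrank_range_add_finrank_ker res
      rw [LinearMap.range_eq_top.2 hressurj, finrank_top] at hrk
      have hker : Module.finrank K ↥(LinearMap.ker res)
          = Module.finrank K ((M ⧸ S) →ₗ[A] I) := LinearEquiv.finrank_eq kEquiv
      have hadd := my_cmult_add (K := K) (e j) (h.idem j) S
      omega

end MyAux8

/-! ### STATEMENT 2
For a 1-quasi-hereditary algebra and `j, k ∈ Q₀`, the Jordan–Hölder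
multiplicities satisfy `[P(j):S(k)] = [I(j):S(k)] = |Λ^(j) ∩ Λ^(k)|`. -/
theorem stmt_2 {K A ι : Type} [Field K] [IsAlgClosed K] [Ring A] [Algebra K A]
    [Fintype ι] (le : ι → ι → Prop) (e : ι → A) (h : OneQH K A le e) (j k : ι) :
    (cmult K A (e k) ↥(Pmod A e j) = Set.ncard {i | le j i ∧ le k i}) ∧
    (∀ (Ij : Type) [AddCommGroup Ij] [Module K Ij] [Module A Ij] [IsScalarTower K A Ij],
      IsInjEnv A e j Ij →
        cmult K A (e k) Ij = Set.ncard {i | le j i ∧ le k i}) := by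
  constructor
  · exact my_part1 h j k
  · intro Ij _ _ _ _ hIj
    haveI := h.fd
    haveI : FiniteDimensional K ↥(Pmod A e k) := my_fdSub _
    rw [my_cmult_eq_finrank_hom e k (h.idem k) Ij,
      (my_hom_dim h j Ij hIj ↥(Pmod A e k)).2, my_part1 h k j]
    congr 1
    ext i
    exact and_comm
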